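/- arXiv:1408.1334 — 3 statements merged into one kernel-verified Lean document; each statement's English description precedes it below -/
import Mathlib

section
/- Let ζ be an n-th root of unity, t ≥ 1, ν ≥ 0, and N ≥ (ν+1)n − 1. Then (q d/dq)^ν F(q;N) evaluated at q = ζ equals (q d/dq)^ν F(q;(ν+1)n−1) evaluated at q = ζ. -/
open Polynomial

/-- `(q)_k` over `ℂ`. -/
noncomputable def qPochC (k : ℕ) : Polynomial ℂ := ∏ j ∈ Finset.range k, (1 - X ^ (j + 1))

/-- `F(q;N) = ∑_{k=0}^N (q)_k` over `ℂ`. -/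
noncomputable def FKZC (N : ℕ) : Polynomial ℂ := ∑ k ∈ Finset.range (N + 1), qPochC k

/-- The Euler operator `q d/dq` on polynomials. -/
noncomputable def euler (p : Polynomial ℂ) : Polynomial ℂ := X * derivative p

lemma euler_add (p q : Polynomial ℂ) : euler (p + q) = euler p + euler q := by
  simp [euler, mul_add]

lemma euler_iter_add (ν : ℕ) (p q : Polynomial ℂ) :
    euler^[ν] (p + q) = euler^[ν] p + euler^[ν] q := by
  induction ν generalizing p q with
  | zero => simp
  | succ m ih => simp [Function.iterate_succ_apply, euler_add, ih]

lemma euler_dvd (n m : ℕ) (p : Polynomial ℂ) (h : (1 - X ^ n) ^ (m + 1) ∣ p) :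
    (1 - X ^ n) ^ m ∣ euler p := by
  obtain ⟨g, rfl⟩ := h
  rw [euler, derivative_mul, derivative_pow, mul_add]
  simp only [Nat.add_sub_cancel]
  apply dvd_add
  · exact (((dvd_mul_left ((1 - X ^ n) ^ m) _).mul_right _).mul_right _).mul_left _
  · exact ((pow_dvd_pow _ (Nat.le_succ m)).mul_right _).mul_left _

lemma euler_iter_eval_zero (n : ℕ) (ζ : ℂ) (hζ : ζ ^ n = 1) (ν : ℕ) (p : Polynomial ℂ)
    (h : (1 - X ^ n) ^ (ν + 1) ∣ p) : (euler^[ν] p).eval ζ = 0 := by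
  induction ν generalizing p with
  | zero =>
    obtain ⟨g, rfl⟩ := h
    simp [hζ]
  | succ m ih =>
    rw [Function.iterate_succ_apply]
    exact ih _ (euler_dvd n (m + 1) p h)

lemma dvd_qPochC (n ν k : ℕ) (hn : 0 < n) (hk : (ν + 1) * n ≤ k) :
    (1 - X ^ n) ^ (ν + 1) ∣ (qPochC k : Polynomial ℂ) := by
  have key : ∀ i ∈ Finset.range (ν + 1),
      (1 - X ^ n : Polynomial ℂ) ∣ (1 - X ^ (((i + 1) * n - 1) + 1)) := by
    intro i _
    have hpos : 0 < (i + 1) * n := Nat.mul_pos (Nat.succ_pos i) hn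
    rw [Nat.sub_add_cancel hpos]
    have := sub_dvd_pow_sub_pow (X ^ n : Polynomial ℂ) 1 (i + 1)
    simpa [← pow_mul, mul_comm n (i + 1)] using this.neg_left.neg_right
  -- product over the image
  have hinj : Set.InjOn (fun i => (i + 1) * n - 1) ↑(Finset.range (ν + 1)) := by
    intro a _ b _ hab
    have ha : 0 < (a + 1) * n := Nat.mul_pos (Nat.succ_pos a) hn
    have hb : 0 < (b + 1) * n := Nat.mul_pos (Nat.succ_pos b) hn
    have hab' : (a + 1) * n - 1 = (b + 1) * n - 1 := hab
    have : (a + 1) * n = (b + 1) * n := by omega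
    exact by
      have := Nat.eq_of_mul_eq_mul_right hn this
      omega
  have hsub : (Finset.range (ν + 1)).image (fun i => (i + 1) * n - 1) ⊆ Finset.range k := by
    intro j hj
    simp only [Finset.mem_image, Finset.mem_range] at hj ⊢
    obtain ⟨i, hi, rfl⟩ := hj
    have h1 : (i + 1) * n ≤ (ν + 1) * n := Nat.mul_le_mul_right n (by omega)
    have h2 : 0 < (i + 1) * n := Nat.mul_pos (Nat.succ_pos i) hn
    omega
  have h1 : ∏ j ∈ (Finset.range (ν + 1)).image (fun i => (i + 1) * n - 1),
      (1 - X ^ (j + 1) : Polynomial ℂ) ∣ qPochC k := by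
    unfold qPochC
    exact Finset.prod_dvd_prod_of_subset _ _ _ hsub
  refine dvd_trans ?_ h1
  rw [Finset.prod_image hinj]
  calc (1 - X ^ n : Polynomial ℂ) ^ (ν + 1)
      = ∏ _i ∈ Finset.range (ν + 1), (1 - X ^ n : Polynomial ℂ) := by
        rw [Finset.prod_const, Finset.card_range]
    _ ∣ _ := Finset.prod_dvd_prod_of_dvd _ _ key

/-- for an `n`-th root of unity `ζ`, `ν ≥ 0` and `N ≥ (ν+1)n - 1`,
`(q d/dq)^ν F(q;N)` at `q = ζ` equals `(q d/dq)^ν F(q;(ν+1)n-1)` at `q = ζ`. -/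
theorem euler_FKZ_eval_stable (n : ℕ) (hn : 0 < n) (ζ : ℂ) (hζ : ζ ^ n = 1)
    (ν N : ℕ) (hN : (ν + 1) * n - 1 ≤ N) :
    (euler^[ν] (FKZC N)).eval ζ = (euler^[ν] (FKZC ((ν + 1) * n - 1))).eval ζ := by
  set M := (ν + 1) * n - 1 with hM
  have hMn : M + 1 = (ν + 1) * n := by
    have : 0 < (ν + 1) * n := Nat.mul_pos (Nat.succ_pos ν) hn
    omega
  have hsplit : FKZC N = FKZC M + ∑ k ∈ Finset.Ico (M + 1) (N + 1), qPochC k := by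
    unfold FKZC
    rw [Finset.range_eq_Ico, Finset.range_eq_Ico]
    exact (Finset.sum_Ico_consecutive (fun k => qPochC k) (m := 0) (n := M + 1) (k := N + 1) (Nat.zero_le _) (by omega)).symm
  have hdvd : (1 - X ^ n) ^ (ν + 1) ∣ ∑ k ∈ Finset.Ico (M + 1) (N + 1), qPochC k := by
    apply Finset.dvd_sum
    intro k hk
    rw [Finset.mem_Ico] at hk
    exact dvd_qPochC n ν k hn (by omega)
  rw [hsplit, euler_iter_add, eval_add,
    euler_iter_eval_zero n ζ hζ ν _ hdvd, add_zero]
end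

section
/- Let p ≥ 5 be prime and r ≥ 2. Let S(p) be the set of residues mod p of pentagonal numbers (m²−1)/24 with gcd(m,6)=1, and similarly S(p^r) mod p^r. If n ∈ S(p) and n ≢ −1/24 (mod p) (where 1/24 is the inverse of 24 mod p), then n + pk ∈ S(p^r) for all 0 ≤ k < p^{r-1}. -/
/-- `i` is congruent modulo `t` to a pentagonal number `(m²-1)/24` with `gcd(m,6)=1`. -/
def PentRes (t i : ℕ) : Prop :=
  ∃ m x : ℤ, Int.gcd m 6 = 1 ∧ 24 * x = m ^ 2 - 1 ∧ (x : ZMod t) = (i : ZMod t)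

/-- Hensel step iterated: a square root mod `p` lifts to mod `p^(s+1)`. -/
lemma sq_lift (p : ℕ) (hp : p.Prime) (hp2 : p ≠ 2) (c : ℤ) (hc : ¬ ((p:ℤ) ∣ c))
    (h : ∃ m : ℤ, (p:ℤ) ∣ m ^ 2 - c) (s : ℕ) :
    ∃ m : ℤ, (p:ℤ) ^ (s + 1) ∣ m ^ 2 - c := by
  haveI : Fact p.Prime := ⟨hp⟩
  induction s with
  | zero => simpa using h
  | succ s ih =>
    obtain ⟨m, hm⟩ := ih
    have hpm : ¬ ((p:ℤ) ∣ m) := by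
      intro hd
      apply hc
      have h1 : (p:ℤ) ∣ m ^ 2 - c :=
        dvd_trans (dvd_pow_self (p:ℤ) (Nat.succ_ne_zero s)) hm
      have h2 : (p:ℤ) ∣ m ^ 2 := hd.pow (by norm_num)
      have := Int.dvd_sub h2 h1
      simpa using this
    obtain ⟨d, hd⟩ := hm
    -- solve 2*m*t + d ≡ 0 mod p
    have hm0 : ((m : ZMod p)) ≠ 0 := by
      intro h0
      exact hpm ((ZMod.intCast_zmod_eq_zero_iff_dvd m p).mp h0)
    have h20 : ((2 : ZMod p)) ≠ 0 := by
      intro h0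
      have hd2 : (p : ℕ) ∣ 2 := (ZMod.natCast_eq_zero_iff 2 p).mp (by exact_mod_cast h0)
      exact hp2 ((Nat.prime_dvd_prime_iff_eq hp Nat.prime_two).mp hd2)
    have h2m : ((2 * m : ℤ) : ZMod p) ≠ 0 := by
      push_cast
      exact mul_ne_zero h20 hm0
    set u : ZMod p := (-(d : ZMod p)) * ((2 * m : ℤ) : ZMod p)⁻¹ with hu
    set t : ℤ := (u.val : ℤ) with htdef
    have ht : ((t : ZMod p)) = u := by
      simp [htdef, ZMod.natCast_val, ZMod.cast_id]
    have hsolve : (p:ℤ) ∣ 2 * m * t + d := by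
      rw [← ZMod.intCast_zmod_eq_zero_iff_dvd]
      push_cast
      rw [ht, hu]
      have : ((2:ZMod p) * (m:ZMod p)) = ((2 * m : ℤ) : ZMod p) := by push_cast; ring
      rw [this]
      field_simp
      ring
    obtain ⟨e, he⟩ := hsolve
    refine ⟨m + (p:ℤ) ^ (s + 1) * t, e + (p:ℤ) ^ s * t ^ 2, ?_⟩
    have key : (m + (p:ℤ) ^ (s + 1) * t) ^ 2 - c
        = (p:ℤ) ^ (s + 1 + 1) * (e + (p:ℤ) ^ s * t ^ 2) := by
      have hps : (p:ℤ) ^ (s + 1 + 1) = (p:ℤ) ^ (s + 1) * p := by ring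
      calc (m + (p:ℤ) ^ (s + 1) * t) ^ 2 - c
          = (m ^ 2 - c) + (p:ℤ) ^ (s + 1) * (2 * m * t) + ((p:ℤ) ^ (s + 1)) ^ 2 * t ^ 2 := by
            ring
        _ = (p:ℤ) ^ (s + 1) * (2 * m * t + d) + ((p:ℤ) ^ (s + 1)) ^ 2 * t ^ 2 := by
            rw [hd]; ring
        _ = (p:ℤ) ^ (s + 1 + 1) * (e + (p:ℤ) ^ s * t ^ 2) := by
            rw [he, hps]; ring
    exact key

/-- for `p ≥ 5` prime and `r ≥ 2`, a pentagonal residue `n` mod `p` with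
`n ≢ -1/24 (mod p)` lifts to `n + pk ∈ S(p^r)` for all `0 ≤ k < p^{r-1}`. -/
theorem pentRes_lifts (p r : ℕ) (hp : p.Prime) (hp5 : 5 ≤ p) (hr : 2 ≤ r)
    (n : ℕ) (hn : n < p) (hpent : PentRes p n)
    (hne : (24 * n + 1 : ZMod p) ≠ 0) :
    ∀ k < p ^ (r - 1), PentRes (p ^ r) (n + p * k) := by
  intro k _
  haveI : Fact p.Prime := ⟨hp⟩
  have hp2 : p ≠ 2 := by omega
  have hp3 : p ≠ 3 := by omega
  set N : ℤ := (n : ℤ) + (p : ℤ) * k with hN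
  set c : ℤ := 24 * N + 1 with hc'
  -- c is not divisible by p
  have hc : ¬ ((p:ℤ) ∣ c) := by
    intro hd
    apply hne
    have h0 : ((c : ℤ) : ZMod p) = 0 := (ZMod.intCast_zmod_eq_zero_iff_dvd c p).mpr hd
    have : ((c : ℤ) : ZMod p) = 24 * (n : ZMod p) + 1 := by
      rw [hc', hN]; push_cast; simp [ZMod.natCast_self]
    rw [this] at h0
    exact h0
  -- initial square root mod p
  obtain ⟨m, x, hg, h24, hxm⟩ := hpent
  have hdvd1 : (p:ℤ) ∣ x - (n : ℤ) := by
    rw [← ZMod.intCast_zmod_eq_zero_iff_dvd]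
    push_cast
    rw [hxm]
    ring
  obtain ⟨w, hw⟩ := hdvd1
  have hinit : ∃ m : ℤ, (p:ℤ) ∣ m ^ 2 - c := by
    refine ⟨m, 24 * w - 24 * k, ?_⟩
    rw [hc', hN]
    linear_combination -h24 + 24 * hw
  -- lift to mod p^r
  obtain ⟨m₁, hm₁⟩ := sq_lift p hp hp2 c hc hinit (r - 1)
  have hrr : r - 1 + 1 = r := by omega
  rw [hrr] at hm₁
  -- p^r is coprime to 6, adjust m₁ mod 6
  have hcop6 : Nat.Coprime (p ^ r) 6 := by
    apply Nat.Coprime.pow_left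
    have : ¬ p ∣ 6 := by
      intro hd
      rcases (Nat.Prime.dvd_mul hp).mp (show p ∣ 2 * 3 by simpa using hd) with h | h
      · exact hp2 ((Nat.prime_dvd_prime_iff_eq hp Nat.prime_two).mp h)
      · exact hp3 ((Nat.prime_dvd_prime_iff_eq hp Nat.prime_three).mp h)
    exact (Nat.Prime.coprime_iff_not_dvd hp).mpr this
  set u6 : (ZMod 6)ˣ := ZMod.unitOfCoprime (p ^ r) hcop6 with hu6
  set j : ℤ := (((1 - (m₁ : ZMod 6)) * (↑u6⁻¹ : ZMod 6)).val : ℤ) with hj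
  set M : ℤ := m₁ + (p:ℤ) ^ r * j with hM
  have hM6 : (6:ℤ) ∣ M - 1 := by
    suffices h0 : ((M - 1 : ℤ) : ZMod 6) = 0 by
      exact_mod_cast (ZMod.intCast_zmod_eq_zero_iff_dvd (M - 1) 6).mp h0
    have hcast : ((M - 1 : ℤ) : ZMod 6)
        = (m₁ : ZMod 6) + (↑u6 : ZMod 6) * ((1 - (m₁ : ZMod 6)) * (↑u6⁻¹ : ZMod 6)) - 1 := by
      rw [hM, hj]
      push_cast
      have hpu : (((p:ℤ) ^ r : ℤ) : ZMod 6) = (↑u6 : ZMod 6) := by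
        rw [hu6]
        push_cast [ZMod.coe_unitOfCoprime]
        ring
      rw [← hpu]
      push_cast
      simp [ZMod.natCast_val, ZMod.cast_id]
    rw [hcast]
    have : (↑u6 : ZMod 6) * ((1 - (m₁ : ZMod 6)) * (↑u6⁻¹ : ZMod 6))
        = (1 - (m₁ : ZMod 6)) * ((↑u6 : ZMod 6) * (↑u6⁻¹ : ZMod 6)) := by ring
    rw [this, ← Units.val_mul, mul_inv_cancel] -- u6 * u6⁻¹ = 1
    simp
  obtain ⟨v, hv⟩ := hM6
  -- gcd(M,6)=1
  have hgcd : Int.gcd M 6 = 1 := by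
    rw [← Int.isCoprime_iff_gcd_eq_one]
    exact ⟨1, -v, by linear_combination hv⟩
  -- p^r divides M² - c
  obtain ⟨d1, hd1⟩ := hm₁
  have hMc : (p:ℤ) ^ r ∣ M ^ 2 - c := by
    refine ⟨d1 + 2 * m₁ * j + (p:ℤ) ^ r * j ^ 2, ?_⟩
    rw [hM]
    linear_combination hd1
  -- 24 ∣ M² - 1
  have h24dvd : ∃ x₀ : ℤ, M ^ 2 - 1 = 24 * x₀ := by
    rcases Int.even_or_odd v with ⟨b, hb⟩ | ⟨b, hb⟩
    · exact ⟨b * (6 * b + 1), by rw [show M = 1 + 6 * v by linarith [hv], hb]; ring⟩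
    · exact ⟨(2 * b + 1) * (3 * b + 2), by rw [show M = 1 + 6 * v by linarith [hv], hb]; ring⟩
  obtain ⟨x₀, hx₀⟩ := h24dvd
  refine ⟨M, x₀, hgcd, hx₀.symm, ?_⟩
  -- x₀ ≡ n + p*k mod p^r
  have hcop24 : IsCoprime ((p:ℤ) ^ r) 24 := by
    have : Nat.Coprime (p ^ r) 24 := by
      apply Nat.Coprime.pow_left
      have : ¬ p ∣ 24 := by
        intro hd
        have h24' : p ∣ 2 ^ 3 * 3 := by simpa using hd
        rcases (Nat.Prime.dvd_mul hp).mp h24' with h | h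
        · exact hp2 ((Nat.prime_dvd_prime_iff_eq hp Nat.prime_two).mp (hp.dvd_of_dvd_pow h))
        · exact hp3 ((Nat.prime_dvd_prime_iff_eq hp Nat.prime_three).mp h)
      exact (Nat.Prime.coprime_iff_not_dvd hp).mpr this
    exact_mod_cast Nat.isCoprime_iff_coprime.mpr this
  have hdvd2 : (p:ℤ) ^ r ∣ 24 * (x₀ - N) := by
    have : 24 * (x₀ - N) = M ^ 2 - c := by rw [hc']; linarith [hx₀]
    rw [this]
    exact hMc
  have hdvd3 : (p:ℤ) ^ r ∣ x₀ - N := hcop24.dvd_of_dvd_mul_left hdvd2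
  have : ((x₀ - N : ℤ) : ZMod (p ^ r)) = 0 := by
    rw [ZMod.intCast_zmod_eq_zero_iff_dvd]
    exact_mod_cast hdvd3
  have hfin : ((x₀ : ℤ) : ZMod (p ^ r)) = ((N : ℤ) : ZMod (p ^ r)) := by
    have h' : ((x₀ : ℤ) : ZMod (p ^ r)) - ((N : ℤ) : ZMod (p ^ r)) = 0 := by
      push_cast at this
      linear_combination this
    exact sub_eq_zero.mp h'
  rw [hfin, hN]
  push_cast
  ring
end

section
/- Let p ≥ 5 be prime and r ≥ 2. If n ∈ {0,...,p-1} satisfies n ≡ −1/24 (mod p), then n + p^r − p is not in S(p^r), the set of residues of pentagonal numbers (m²−1)/24 (gcd(m,6)=1) modulo p^r. -/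
/-- for `p ≥ 5` prime and `r ≥ 2`, if `n ≡ -1/24 (mod p)` with `n < p`, then
`n + p^r - p` is not a pentagonal residue mod `p^r`. -/
theorem pentRes_exceptional_not_lift (p r : ℕ) (hp : p.Prime) (hp5 : 5 ≤ p) (hr : 2 ≤ r)
    (n : ℕ) (hn : n < p) (hcong : (24 * n + 1 : ZMod p) = 0) :
    ¬ PentRes (p ^ r) (n + p ^ r - p) := by
  rintro ⟨m, x, hgcd, hmx, hx⟩
  have hple : p ≤ n + p ^ r := by
    have : p ≤ p ^ r := Nat.le_self_pow (by omega) p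
    omega
  have hcast : ((n + p ^ r - p : ℕ) : ℤ) = (n : ℤ) + (p:ℤ) ^ r - p := by
    push_cast [hple]; ring
  -- divisibility from the ZMod equation
  have h1 : ((p:ℤ)) ^ r ∣ x - ((n : ℤ) + (p:ℤ) ^ r - p) := by
    have h0 : ((x - ((n + p ^ r - p : ℕ) : ℤ) : ℤ) : ZMod (p ^ r)) = 0 := by
      push_cast
      rw [hx]
      push_cast
      ring
    have := (ZMod.intCast_zmod_eq_zero_iff_dvd _ _).mp h0
    rw [hcast] at this
    exact_mod_cast this
  have hp2r : ((p:ℤ)) ^ 2 ∣ ((p:ℤ)) ^ r := pow_dvd_pow _ hr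
  have h2 : ((p:ℤ)) ^ 2 ∣ x - ((n : ℤ) - p) := by
    have := dvd_add (hp2r.trans h1) hp2r
    have e : (x - ((n : ℤ) + (p:ℤ) ^ r - p)) + (p:ℤ) ^ r = x - ((n:ℤ) - p) := by ring
    rwa [e] at this
  have h3 : ((p:ℤ)) ^ 2 ∣ m ^ 2 - (24 * (n:ℤ) + 1 - 24 * p) := by
    have h := h2.mul_left 24
    have e : 24 * (x - ((n:ℤ) - p)) = m ^ 2 - (24 * (n:ℤ) + 1 - 24 * p) := by linarith
    rwa [e] at h
  -- p ∣ 24n+1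
  have hA : (p:ℤ) ∣ 24 * (n:ℤ) + 1 := by
    have h0 : (((24 * n + 1 : ℕ)) : ZMod p) = 0 := by push_cast; exact_mod_cast hcong
    have := (ZMod.natCast_eq_zero_iff _ _).mp h0
    exact_mod_cast Int.natCast_dvd_natCast.mpr this
  -- p ∣ m
  have hpm2 : (p:ℤ) ∣ m ^ 2 := by
    obtain ⟨a, ha⟩ := h3
    obtain ⟨b, hb⟩ := hA
    exact ⟨p * a + b - 24, by nlinarith⟩
  have hpI : Prime (p : ℤ) := Nat.prime_iff_prime_int.mp hp
  have hpm : (p:ℤ) ∣ m := hpI.dvd_of_dvd_pow hpm2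
  have hp2m2 : ((p:ℤ)) ^ 2 ∣ m ^ 2 := pow_dvd_pow_of_dvd hpm 2
  have hfinal : ((p:ℤ)) ^ 2 ∣ 24 * (n:ℤ) + 1 - 24 * p := by
    have := dvd_sub hp2m2 h3
    have e : m ^ 2 - (m ^ 2 - (24 * (n:ℤ) + 1 - 24 * p)) = 24 * (n:ℤ) + 1 - 24 * p := by ring
    rwa [e] at this
  obtain ⟨c, hc⟩ := hfinal
  -- p² ≡ 1 mod 24
  have hcop2 : Nat.Coprime p 2 := (Nat.coprime_primes hp Nat.prime_two).mpr (by omega)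
  have hcop3 : Nat.Coprime p 3 := (Nat.coprime_primes hp Nat.prime_three).mpr (by omega)
  have hcop24 : Nat.Coprime p 24 := by
    have : Nat.Coprime p (8 * 3) := Nat.Coprime.mul_right (by simpa using hcop2.pow_right 3) hcop3
    simpa using this
  have hsq : ((p : ZMod 24)) ^ 2 = 1 := by
    have hu : ∀ u : (ZMod 24)ˣ, ((u : ZMod 24)) ^ 2 = 1 := by decide
    have := hu (ZMod.unitOfCoprime p hcop24)
    simpa using this
  have h24 : (24:ℤ) ∣ (p:ℤ) ^ 2 - 1 := by
    have h0 : (((p:ℤ) ^ 2 - 1 : ℤ) : ZMod 24) = 0 := by push_cast [hsq]; ring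
    exact_mod_cast (ZMod.intCast_zmod_eq_zero_iff_dvd _ _).mp h0
  -- 24 ∣ c - 1
  have h24c : (24:ℤ) ∣ c - 1 := by
    obtain ⟨d, hd⟩ := h24
    -- p²c - 1 = 24n - 24p + 24p? : p²c = 24n+1-24p, so p²c - 1 = 24(n - p)
    -- c - 1 = (p²c - 1) - c(p² - 1) = 24(n-p) - 24cd
    exact ⟨(n:ℤ) - p - c * d, by nlinarith⟩
  have hpos : (0:ℤ) < (p:ℤ) ^ 2 := by positivity
  have hnle : (n:ℤ) ≤ (p:ℤ) - 1 := by
    have : (n:ℤ) < (p:ℤ) := by exact_mod_cast hn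
    omega
  have hc0 : c < 0 := by nlinarith
  have hle : (24:ℤ) ≤ 1 - c := Int.le_of_dvd (by omega) (by simpa using (dvd_neg.mpr h24c))
  have hp5' : (5:ℤ) ≤ (p:ℤ) := by exact_mod_cast hp5
  nlinarith
end
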